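/- Random subsets form strong intersection dispersers: Let U be a universe of size m₀, and let 𝓗 = {H₁,…,H_{k₀}} be random subsets of U where each element is included in each H_j independently with probability p. For constants 0 < p, κ < 1 and ℓ ∈ ℕ, with probability tending to 1 as m₀ → ∞, 𝓗 is a (κk₀^ℓ, ℓ, 2ℓ·e^{−pκk₀/ℓ})-strong intersection disperser. -/

import Mathlib

open Finset

/-- Indexed-family version of an `(r, ℓ, η)`-strong intersection disperser: for any at least
`r` distinct subcollections (given by index sets), each of size at most `ℓ`, the union of
their intersections covers all but an `η` fraction of `U`. -/
def SIDFam {m k : ℕ} (U : Finset (Fin m)) (H : Fin k → Finset (Fin m))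
    (r : ℝ) (ℓ : ℕ) (η : ℝ) : Prop :=
  ∀ Js : Finset (Finset (Fin k)),
    (∀ J ∈ Js, J.card ≤ ℓ) → r ≤ (Js.card : ℝ) →
      ((U \ Js.sup (fun J => U ∩ J.inf H)).card : ℝ) ≤ η * (U.card : ℝ)


namespace SID10
noncomputable section
open Classical
set_option maxHeartbeats 1000000

def f (p : ℝ) (c : Bool) : ℝ := if c then p else 1 - p

def colW {k : ℕ} (p : ℝ) (b : Fin k → Bool) : ℝ := ∏ j, f p (b j)

def Unc {k : ℕ} (T : Finset (Finset (Fin k))) (b : Fin k → Bool) : Prop :=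
  ∀ t ∈ T, ∃ j ∈ t, b j = false

def Q {k : ℕ} (p : ℝ) (T : Finset (Finset (Fin k))) : ℝ :=
  ∑ b : Fin k → Bool, colW p b * (if Unc T b then 1 else 0)

variable {p : ℝ}

lemma f_nonneg (hp : 0 ≤ p) (hp1 : p ≤ 1) (c : Bool) : 0 ≤ f p c := by
  cases c <;> simp [f] <;> linarith

lemma f_sum : f p true + f p false = 1 := by simp [f]

lemma colW_nonneg (hp : 0 ≤ p) (hp1 : p ≤ 1) {k : ℕ} (b : Fin k → Bool) : 0 ≤ colW p b :=
  Finset.prod_nonneg fun j _ => f_nonneg hp hp1 _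

lemma sum_colW {k : ℕ} : ∑ b : Fin k → Bool, colW p b = 1 := by
  have h := Fintype.prod_sum (fun (_ : Fin k) (c : Bool) => f p c)
  simp only [colW]
  rw [← h]
  simp [f]

lemma Q_nonneg (hp : 0 ≤ p) (hp1 : p ≤ 1) {k : ℕ} (T : Finset (Finset (Fin k))) : 0 ≤ Q p T :=
  Finset.sum_nonneg fun b _ => mul_nonneg (colW_nonneg hp hp1 b) (by positivity)

lemma Q_le_one (hp : 0 ≤ p) (hp1 : p ≤ 1) {k : ℕ} (T : Finset (Finset (Fin k))) : Q p T ≤ 1 := by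
  calc Q p T ≤ ∑ b : Fin k → Bool, colW p b := by
        apply Finset.sum_le_sum
        intro b _
        have := colW_nonneg hp hp1 (p := p) b
        split <;> simp <;> linarith
    _ = 1 := sum_colW

lemma Q_empty_mem {k : ℕ} (T : Finset (Finset (Fin k))) (h : ∅ ∈ T) : Q p T = 0 := by
  apply Finset.sum_eq_zero
  intro b _
  have : ¬ Unc T b := by
    intro hU
    obtain ⟨j, hj, -⟩ := hU ∅ h
    exact absurd hj (Finset.notMem_empty j)
  simp [this]

lemma Q_anti {k : ℕ} (hp : 0 ≤ p) (hp1 : p ≤ 1) {S T : Finset (Finset (Fin k))} (h : S ⊆ T) :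
    Q p T ≤ Q p S := by
  apply Finset.sum_le_sum
  intro b _
  apply mul_le_mul_of_nonneg_left _ (colW_nonneg hp hp1 b)
  have : Unc T b → Unc S b := fun hU t ht => hU t (h ht)
  by_cases h1 : Unc T b
  · simp [h1, this h1]
  · simp only [h1, if_false]
    positivity

-- sums over functions invariant in coordinate x split in half
lemma sum_filter_invariant {k : ℕ} (x : Fin k) (H : (Fin k → Bool) → ℝ)
    (hH : ∀ b c, H (Function.update b x c) = H b) (c : Bool) :
    ∑ b ∈ univ.filter (fun b : Fin k → Bool => b x = c), H b
      = 2⁻¹ * ∑ b : Fin k → Bool, H b := by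
  have key : ∑ b ∈ univ.filter (fun b : Fin k → Bool => b x = c), H b
      = ∑ b ∈ univ.filter (fun b : Fin k → Bool => b x = !c), H b := by
    apply Finset.sum_nbij' (fun b => Function.update b x (!c))
      (fun b => Function.update b x c)
    · intro a ha
      simp [Finset.mem_filter]
    · intro a ha
      simp [Finset.mem_filter]
    · intro a ha
      simp only [Finset.mem_filter, Finset.mem_univ, true_and] at ha
      rw [Function.update_idem, ← ha, Function.update_eq_self]
    · intro a ha
      simp only [Finset.mem_filter, Finset.mem_univ, true_and] at ha
      rw [Function.update_idem, ← ha, Function.update_eq_self]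
    · intro a ha
      exact (hH a (!c)).symm
  have total : ∑ b ∈ univ.filter (fun b : Fin k → Bool => b x = c), H b
      + ∑ b ∈ univ.filter (fun b : Fin k → Bool => b x = !c), H b
      = ∑ b : Fin k → Bool, H b := by
    rw [← Finset.sum_filter_add_sum_filter_not univ (fun b : Fin k → Bool => b x = c) H]
    congr 1
    apply Finset.sum_congr _ (fun _ _ => rfl)
    apply Finset.filter_congr
    intro b _
    cases c <;> cases hbx : b x <;> simp [hbx]
  rw [← key] at total
  linarith

lemma colW_eq {k : ℕ} (x : Fin k) (b : Fin k → Bool) :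
    colW p b = f p (b x) * ∏ j ∈ univ.erase x, f p (b j) :=
  (Finset.mul_prod_erase univ _ (mem_univ x)).symm

lemma sum_filter_colW {k : ℕ} (x : Fin k) (g : (Fin k → Bool) → ℝ)
    (hg : ∀ b c, g (Function.update b x c) = g b) (c : Bool) :
    ∑ b ∈ univ.filter (fun b : Fin k → Bool => b x = c), colW p b * g b
      = f p c * ∑ b : Fin k → Bool, colW p b * g b := by
  set H : (Fin k → Bool) → ℝ := fun b => (∏ j ∈ univ.erase x, f p (b j)) * g b with hHdef
  have hH : ∀ b c, H (Function.update b x c) = H b := by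
    intro b c'
    simp only [hHdef]
    rw [hg]
    congr 1
    apply Finset.prod_congr rfl
    intro j hj
    rw [Function.update_of_ne (Finset.ne_of_mem_erase hj)]
  have lhs : ∀ c' : Bool, ∑ b ∈ univ.filter (fun b : Fin k → Bool => b x = c'), colW p b * g b
      = f p c' * (2⁻¹ * ∑ b : Fin k → Bool, H b) := by
    intro c'
    rw [← sum_filter_invariant x H hH c']
    rw [Finset.mul_sum]
    apply Finset.sum_congr rfl
    intro b hb
    simp only [Finset.mem_filter, Finset.mem_univ, true_and] at hb
    rw [colW_eq x b, hb, hHdef]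
    ring
  have rhs : ∑ b : Fin k → Bool, colW p b * g b = 2⁻¹ * ∑ b : Fin k → Bool, H b := by
    rw [← Finset.sum_filter_add_sum_filter_not univ (fun b : Fin k → Bool => b x = true)
      (fun b => colW p b * g b)]
    have : (univ.filter (fun b : Fin k → Bool => ¬ b x = true))
        = univ.filter (fun b : Fin k → Bool => b x = false) := by
      apply Finset.filter_congr; intro b _; simp
    rw [this, lhs true, lhs false]
    have hf : f p true + f p false = 1 := by simp [f]
    linear_combination (2⁻¹ * ∑ b : Fin k → Bool, H b) * hf
  rw [lhs c, rhs]

lemma Unc_invariant {k : ℕ} {x : Fin k} {S : Finset (Finset (Fin k))}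
    (hS : ∀ t ∈ S, x ∉ t) (b : Fin k → Bool) (c : Bool) :
    Unc S (Function.update b x c) ↔ Unc S b := by
  have h : ∀ t ∈ S, ∀ j ∈ t, Function.update b x c j = b j := by
    intro t ht j hj
    exact Function.update_of_ne (fun h => hS t ht (by rw [← h]; exact hj)) _ _
  constructor
  · intro hU t ht
    obtain ⟨j, hj, hbj⟩ := hU t ht
    exact ⟨j, hj, (h t ht j hj) ▸ hbj⟩
  · intro hU t ht
    obtain ⟨j, hj, hbj⟩ := hU t ht
    exact ⟨j, hj, (h t ht j hj).symm ▸ hbj⟩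

/-- The key recursion step. -/
lemma Q_step (hp : 0 ≤ p) (hp1 : p ≤ 1) {k : ℕ} (x : Fin k) (T : Finset (Finset (Fin k))) :
    Q p T ≤ p * Q p ((T.filter (fun t => x ∈ t)).image (fun t => t.erase x))
      + (1 - p) * Q p (T.filter (fun t => x ∉ t)) := by
  set Tx := (T.filter (fun t => x ∈ t)).image (fun t => t.erase x) with hTx
  set Tn := T.filter (fun t => x ∉ t) with hTn
  have hTxavoid : ∀ t ∈ Tx, x ∉ t := by
    intro t ht
    simp only [hTx, Finset.mem_image, Finset.mem_filter] at ht
    obtain ⟨s, ⟨-, -⟩, rfl⟩ := ht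
    exact Finset.notMem_erase x s
  have hTnavoid : ∀ t ∈ Tn, x ∉ t := by
    intro t ht
    simp only [hTn, Finset.mem_filter] at ht
    exact ht.2
  have hQ : Q p T = ∑ b ∈ univ.filter (fun b : Fin k → Bool => b x = true),
        colW p b * (if Unc T b then 1 else 0)
      + ∑ b ∈ univ.filter (fun b : Fin k → Bool => b x = false),
        colW p b * (if Unc T b then 1 else 0) := by
    rw [Q, ← Finset.sum_filter_add_sum_filter_not univ (fun b : Fin k → Bool => b x = true)]
    congr 1
    apply Finset.sum_congr _ (fun _ _ => rfl)
    apply Finset.filter_congr; intro b _; simp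
  have step1 : ∑ b ∈ univ.filter (fun b : Fin k → Bool => b x = true),
        colW p b * (if Unc T b then 1 else 0)
      ≤ ∑ b ∈ univ.filter (fun b : Fin k → Bool => b x = true),
        colW p b * (if Unc Tx b then 1 else 0) := by
    apply Finset.sum_le_sum
    intro b hb
    simp only [Finset.mem_filter, Finset.mem_univ, true_and] at hb
    apply mul_le_mul_of_nonneg_left _ (Finset.prod_nonneg fun j _ => by
      cases hbj : b j <;> simp [f] <;> linarith)
    have himp : Unc T b → Unc Tx b := by
      intro hU t ht
      simp only [hTx, Finset.mem_image, Finset.mem_filter] at ht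
      obtain ⟨s, ⟨hsT, hxs⟩, rfl⟩ := ht
      obtain ⟨j, hj, hbj⟩ := hU s hsT
      refine ⟨j, Finset.mem_erase.mpr ⟨?_, hj⟩, hbj⟩
      rintro rfl
      rw [hb] at hbj; exact absurd hbj (by simp)
    by_cases h1 : Unc T b
    · simp [h1, himp h1]
    · simp only [h1, if_false, mul_zero]
      positivity
  have step2 : ∑ b ∈ univ.filter (fun b : Fin k → Bool => b x = false),
        colW p b * (if Unc T b then 1 else 0)
      ≤ ∑ b ∈ univ.filter (fun b : Fin k → Bool => b x = false),
        colW p b * (if Unc Tn b then 1 else 0) := by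
    apply Finset.sum_le_sum
    intro b hb
    apply mul_le_mul_of_nonneg_left _ (Finset.prod_nonneg fun j _ => by
      cases hbj : b j <;> simp [f] <;> linarith)
    have himp : Unc T b → Unc Tn b := fun hU t ht => hU t (Finset.mem_filter.mp ht).1
    by_cases h1 : Unc T b
    · simp [h1, himp h1]
    · simp only [h1, if_false]
      positivity
  have e1 : ∑ b ∈ univ.filter (fun b : Fin k → Bool => b x = true),
        colW p b * (if Unc Tx b then 1 else 0) = f p true * Q p Tx := by
    rw [sum_filter_colW x _ (fun b c => by rw [if_congr (Unc_invariant hTxavoid b c) rfl rfl])]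
    rfl
  have e2 : ∑ b ∈ univ.filter (fun b : Fin k → Bool => b x = false),
        colW p b * (if Unc Tn b then 1 else 0) = f p false * Q p Tn := by
    rw [sum_filter_colW x _ (fun b c => by rw [if_congr (Unc_invariant hTnavoid b c) rfl rfl])]
    rfl
  rw [hQ]
  calc _ ≤ f p true * Q p Tx + f p false * Q p Tn := by
        rw [← e1, ← e2]; exact add_le_add step1 step2
    _ = p * Q p Tx + (1 - p) * Q p Tn := by simp [f]

lemma card_small_powerset {α : Type*} [DecidableEq α] (s : Finset α) (n ℓ : ℕ) (hs : s.card ≤ n) :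
    ((s.powerset).filter (fun t => t.card ≤ ℓ)).card ≤ (n+1)^ℓ := by
  induction ℓ with
  | zero =>
    have : (s.powerset.filter (fun t => t.card ≤ 0)) ⊆ {∅} := by
      intro t ht
      simp only [Finset.mem_filter, Nat.le_zero, Finset.card_eq_zero] at ht
      simp [ht.2]
    simpa using Finset.card_le_card this
  | succ ℓ ih =>
    have hsub : (s.powerset.filter (fun t => t.card ≤ ℓ+1))
        ⊆ (s.powerset.filter (fun t => t.card ≤ ℓ)) ∪ s.powersetCard (ℓ+1) := by
      intro t ht
      simp only [Finset.mem_filter, Finset.mem_powerset] at ht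
      rcases Nat.lt_or_ge t.card (ℓ+1) with h | h
      · exact Finset.mem_union_left _ (by simp [Finset.mem_filter, Finset.mem_powerset,
          ht.1, Nat.lt_succ_iff.mp h])
      · exact Finset.mem_union_right _ (Finset.mem_powersetCard.mpr ⟨ht.1, le_antisymm ht.2 h⟩)
    calc ((s.powerset).filter (fun t => t.card ≤ ℓ+1)).card
        ≤ _ := Finset.card_le_card hsub
      _ ≤ (s.powerset.filter (fun t => t.card ≤ ℓ)).card + (s.powersetCard (ℓ+1)).card :=
          Finset.card_union_le _ _
      _ ≤ (n+1)^ℓ + n^(ℓ+1) := by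
          apply Nat.add_le_add ih
          rw [Finset.card_powersetCard]
          calc s.card.choose (ℓ+1) ≤ n.choose (ℓ+1) := Nat.choose_le_choose _ hs
            _ ≤ n^(ℓ+1) := Nat.choose_le_pow _ _
      _ ≤ (n+1)^(ℓ+1) := by
          have h1 : n^(ℓ+1) = n * n^ℓ := by ring
          have h2 : (n+1)^(ℓ+1) = (n+1)^ℓ + n * (n+1)^ℓ := by ring
          have h3 : n^ℓ ≤ (n+1)^ℓ := Nat.pow_le_pow_left (by omega) _
          have := Nat.mul_le_mul_left n h3
          omega

lemma exists_good_x {k : ℕ} (hk : 0 < k) (T : Finset (Finset (Fin k)))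
    (hne : ∀ t ∈ T, t ≠ ∅) :
    ∃ x : Fin k, T.card ≤ k * (T.filter (fun t => x ∈ t)).card := by
  have hsum : T.card ≤ ∑ x : Fin k, (T.filter (fun t => x ∈ t)).card := by
    have : ∀ x : Fin k, (T.filter (fun t => x ∈ t)).card = ∑ t ∈ T, if x ∈ t then 1 else 0 := by
      intro x; rw [Finset.card_filter]
    simp_rw [this]
    rw [Finset.sum_comm]
    have : ∀ t ∈ T, 1 ≤ ∑ x : Fin k, if x ∈ t then 1 else 0 := by
      intro t ht
      obtain ⟨y, hy⟩ := Finset.nonempty_iff_ne_empty.mpr (hne t ht)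
      calc (1:ℕ) = if y ∈ t then 1 else 0 := by simp [hy]
        _ ≤ ∑ x : Fin k, if x ∈ t then 1 else 0 :=
            Finset.single_le_sum (f := fun x : Fin k => if x ∈ t then (1:ℕ) else 0)
              (fun x _ => by positivity) (mem_univ y)
    calc T.card = ∑ t ∈ T, 1 := by simp
      _ ≤ _ := Finset.sum_le_sum this
  -- take the max
  obtain ⟨x, -, hx⟩ := Finset.exists_max_image univ (fun x : Fin k => (T.filter (fun t => x ∈ t)).card)
    ⟨⟨0, hk⟩, mem_univ _⟩
  refine ⟨x, hsum.trans ?_⟩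
  calc ∑ y : Fin k, (T.filter (fun t => y ∈ t)).card
      ≤ ∑ _y : Fin k, (T.filter (fun t => x ∈ t)).card :=
        Finset.sum_le_sum (fun y _ => hx y (mem_univ y))
    _ = k * _ := by simp [Finset.sum_const, Finset.card_univ, Nat.smul_one_eq_cast]

lemma Q_empty_family {k : ℕ} : Q p (∅ : Finset (Finset (Fin k))) = 1 := by
  have : ∀ b : Fin k → Bool, Unc (∅ : Finset (Finset (Fin k))) b := by
    intro b t ht
    exact absurd ht (Finset.notMem_empty t)
  simp only [Q, this, if_true, mul_one]
  exact sum_colW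

lemma Q_singletons (hp : 0 ≤ p) (hp1 : p ≤ 1) {k : ℕ} :
    ∀ n : ℕ, ∀ T : Finset (Finset (Fin k)), (∀ t ∈ T, t.card ≤ 1) → ∅ ∉ T → n ≤ T.card →
    Q p T ≤ (1-p)^n := by
  intro n
  induction n with
  | zero => intro T _ _ _; simpa using Q_le_one hp hp1 T
  | succ n ihn =>
    intro T hw hm hcard
    have hTne : T.Nonempty := Finset.card_pos.mp (by omega)
    obtain ⟨t₀, ht₀⟩ := hTne
    have ht₀ne : t₀ ≠ ∅ := fun h => hm (h ▸ ht₀)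
    have : t₀.card = 1 := le_antisymm (hw t₀ ht₀)
      (Finset.card_pos.mpr (Finset.nonempty_iff_ne_empty.mpr ht₀ne))
    obtain ⟨x, hx⟩ := Finset.card_eq_one.mp this
    have hstep := Q_step hp hp1 x T
    set Tx := (T.filter (fun t => x ∈ t)).image (fun t => t.erase x) with hTxdef
    set Tn := T.filter (fun t => x ∉ t) with hTndef
    have hTx0 : Q p Tx = 0 := by
      apply Q_empty_mem
      have : t₀ ∈ T.filter (fun t => x ∈ t) := by
        rw [Finset.mem_filter, hx]
        exact ⟨hx ▸ ht₀, Finset.mem_singleton_self x⟩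
      have h2 : t₀.erase x = ∅ := by rw [hx]; simp
      rw [hTxdef]
      exact h2 ▸ Finset.mem_image_of_mem _ this
    have hTncard : n ≤ Tn.card := by
      have hsplit := Finset.card_filter_add_card_filter_not
        (s := T) (p := fun t => x ∈ t)
      have hb1 : (T.filter (fun t => x ∈ t)) ⊆ {({x} : Finset (Fin k))} := by
        intro t ht
        have htf := Finset.mem_filter.mp ht
        have : ({x} : Finset (Fin k)) = t :=
          Finset.eq_of_subset_of_card_le (Finset.singleton_subset_iff.mpr htf.2)
            (le_trans (hw t htf.1) (by simp))
        simp [← this]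
      have hble := Finset.card_le_card hb1
      simp only [Finset.card_singleton] at hble
      have : Tn.card = (T.filter (fun t => ¬ x ∈ t)).card := rfl
      omega
    have hQTn := ihn Tn (fun t ht => hw t (Finset.mem_filter.mp ht).1)
      (fun h => hm (Finset.mem_filter.mp h).1) hTncard
    calc Q p T ≤ p * Q p Tx + (1-p) * Q p Tn := hstep
      _ = (1-p) * Q p Tn := by rw [hTx0]; ring
      _ ≤ (1-p) * (1-p)^n := by
          apply mul_le_mul_of_nonneg_left hQTn (by linarith)
      _ = (1-p)^(n+1) := by ring

theorem main_lemma (hp : 0 < p) (hp1 : p < 1) :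
    ∀ ℓ : ℕ, 1 ≤ ℓ → ∀ k : ℕ, 0 < k → ∀ T : Finset (Finset (Fin k)),
      (∀ t ∈ T, t.card ≤ ℓ) → ∀ a : ℝ, 0 ≤ a → a ≤ (T.card : ℝ) →
      Q p T ≤ (ℓ:ℝ) * (1 - p) ^ (a / ((ℓ:ℝ) * (k:ℝ) ^ (ℓ - 1))) := by
  have h1p : (0:ℝ) < 1 - p := by linarith
  have h1p1 : (1:ℝ) - p ≤ 1 := by linarith
  intro ℓ hℓ
  induction ℓ, hℓ using Nat.le_induction with
  | base =>
    intro k hk T hw a ha hacard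
    simp only [Nat.cast_one, one_mul, Nat.sub_self, pow_zero, div_one]
    by_cases hm : ∅ ∈ T
    · rw [Q_empty_mem T hm]
      have := Real.rpow_nonneg h1p.le a
      linarith
    · have hn : ⌈a⌉₊ ≤ T.card := Nat.ceil_le.mpr hacard
      calc Q p T ≤ (1-p)^(⌈a⌉₊) := Q_singletons hp.le hp1.le _ T hw hm hn
        _ = (1-p) ^ ((⌈a⌉₊ : ℝ)) := (Real.rpow_natCast _ _).symm
        _ ≤ (1-p) ^ a := Real.rpow_le_rpow_of_exponent_ge h1p h1p1 (Nat.le_ceil a)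
  | succ ℓ hℓ ih =>
    intro k hk T hw a ha hacard
    have hk' : (0:ℝ) < k := by exact_mod_cast hk
    have hℓ' : (1:ℝ) ≤ ℓ := by exact_mod_cast hℓ
    set A : ℝ := a / (((ℓ:ℝ)+1) * (k:ℝ)^ℓ) with hAdef
    set g : ℝ := a * ℓ / ((ℓ:ℝ)+1) with hgdef
    have hA0 : 0 ≤ A := by positivity
    have hg0 : 0 ≤ g := by positivity
    have hkpow : (k:ℝ)^(ℓ-1) * (k:ℝ) = (k:ℝ)^ℓ := by
      rw [← pow_succ, Nat.sub_add_cancel hℓ]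
    have hknz : (k:ℝ) ≠ 0 := ne_of_gt hk'
    have hlnz : (ℓ:ℝ) ≠ 0 := by linarith
    have hl1nz : (ℓ:ℝ) + 1 ≠ 0 := by linarith
    have hkpnz : (k:ℝ)^ℓ ≠ 0 := pow_ne_zero _ hknz
    have hgA : (g / k) / ((ℓ:ℝ) * (k:ℝ)^(ℓ-1)) = A := by
      rw [hgdef, hAdef, div_div]
      rw [show (k:ℝ) * ((ℓ:ℝ) * (k:ℝ)^(ℓ-1)) = (ℓ:ℝ) * (k:ℝ)^ℓ by rw [← hkpow]; ring]
      field_simp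
    have inner : ∀ n : ℕ, ∀ T : Finset (Finset (Fin k)), (∀ t ∈ T, t.card ≤ ℓ+1) →
        g + ((n:ℝ) - 1) * (k:ℝ)^ℓ ≤ (T.card:ℝ) →
        Q p T ≤ (1-p)^n + (ℓ:ℝ) * (1-p)^A := by
      intro n
      induction n with
      | zero =>
        intro T _ _
        have := Q_le_one hp.le hp1.le T
        have h2 : (0:ℝ) ≤ (ℓ:ℝ) * (1-p)^A :=
          mul_nonneg (Nat.cast_nonneg ℓ) (Real.rpow_nonneg h1p.le A)
        simpa using by linarith
      | succ n ihn =>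
        intro T hw' hcard'
        by_cases hm : ∅ ∈ T
        · rw [Q_empty_mem T hm]
          have hh1 : (0:ℝ) ≤ (1-p)^(n+1) := pow_nonneg h1p.le _
          have hh2 : (0:ℝ) ≤ (ℓ:ℝ) * (1-p)^A :=
            mul_nonneg (Nat.cast_nonneg ℓ) (Real.rpow_nonneg h1p.le A)
          linarith
        by_cases hTe : T = ∅
        · subst hTe
          rw [Q_empty_family]
          have hcc : (Finset.card (∅ : Finset (Finset (Fin k))) : ℝ) = 0 := by simp
          rw [hcc] at hcard'
          have hkl : (0:ℝ) < (k:ℝ)^ℓ := by positivity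
          have hn0 : (0:ℝ) ≤ ((n:ℝ)+1) - 1 := by push_cast; linarith [Nat.cast_nonneg (α := ℝ) n]
          have hgz : g = 0 := by
            push_cast at hcard'
            nlinarith [Nat.cast_nonneg (α := ℝ) n]
          have haz : a = 0 := by
            rw [hgdef] at hgz
            have : a * ℓ = 0 := by
              field_simp at hgz
              linarith [hgz]
            rcases mul_eq_zero.mp this with h | h
            · exact h
            · exact absurd h (by positivity)
          have hAz : A = 0 := by rw [hAdef, haz]; simp
          rw [hAz, Real.rpow_zero]
          have : (0:ℝ) ≤ (1-p)^(n+1) := by positivity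
          linarith
        · have hne : ∀ t ∈ T, t ≠ ∅ := fun t ht h => hm (h ▸ ht)
          obtain ⟨x, hx⟩ := exists_good_x hk T hne
          have hstep := Q_step hp.le hp1.le x T
          set Tx := (T.filter (fun t => x ∈ t)).image (fun t => t.erase x) with hTxdef
          set Tn := T.filter (fun t => x ∉ t) with hTndef
          -- card of Tx equals degree
          have hTxcard : Tx.card = (T.filter (fun t => x ∈ t)).card := by
            rw [hTxdef]
            apply Finset.card_image_of_injOn
            intro s hs t ht hst
            simp only [Finset.mem_coe, Finset.mem_filter] at hs ht
            have hst' : s.erase x = t.erase x := hst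
            rw [← Finset.insert_erase hs.2, ← Finset.insert_erase ht.2, hst']
          have hTgelow : g ≤ (T.card : ℝ) := by
            have h1 : (0:ℝ) ≤ ((n:ℝ)+1-1) * (k:ℝ)^ℓ := by
              have h0 : ((n:ℝ)+1-1) = (n:ℝ) := by ring
              rw [h0]; positivity
            push_cast at hcard' ⊢
            linarith
          have hdeg : g / k ≤ (Tx.card : ℝ) := by
            rw [div_le_iff₀ hk']
            have : (T.card : ℝ) ≤ (k:ℝ) * (Tx.card : ℝ) := by
              rw [hTxcard]; exact_mod_cast hx
            nlinarith
          -- width of Tx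
          have hTxw : ∀ t ∈ Tx, t.card ≤ ℓ := by
            intro t ht
            rw [hTxdef] at ht
            obtain ⟨s, hs, hts⟩ := Finset.mem_image.mp ht
            have hsf := Finset.mem_filter.mp hs
            have hte : t = s.erase x := hts.symm
            rw [hte, Finset.card_erase_of_mem hsf.2]
            have := hw' s hsf.1
            omega
          have hQx : Q p Tx ≤ (ℓ:ℝ) * (1-p)^A := by
            have := ih k hk Tx hTxw (g/k) (div_nonneg hg0 hk'.le) hdeg
            rwa [hgA] at this
          -- Tx.card at most k^ℓ
          have hdegle : Tx.card ≤ k^ℓ := by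
            have hsub : Tx ⊆ (univ.erase x).powerset.filter (fun t => t.card ≤ ℓ) := by
              intro t ht
              simp only [Finset.mem_filter, Finset.mem_powerset]
              constructor
              · rw [hTxdef] at ht
                obtain ⟨s, _, hts⟩ := Finset.mem_image.mp ht
                rw [show t = s.erase x from hts.symm]
                exact Finset.erase_subset_erase x (Finset.subset_univ s)
              · exact hTxw t ht
            calc Tx.card ≤ _ := Finset.card_le_card hsub
              _ ≤ ((k-1)+1)^ℓ := card_small_powerset _ _ _ (by
                  rw [Finset.card_erase_of_mem (mem_univ x), Finset.card_univ, Fintype.card_fin])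
              _ = k^ℓ := by congr 1; omega
          have hQn : Q p Tn ≤ (1-p)^n + (ℓ:ℝ) * (1-p)^A := by
            apply ihn Tn (fun t ht => hw' t (Finset.mem_filter.mp ht).1)
            have hsplit := Finset.card_filter_add_card_filter_not
              (s := T) (p := fun t => x ∈ t)
            have hTncard : Tn.card = T.card - (T.filter (fun t => x ∈ t)).card := by
              have : Tn.card = (T.filter (fun t => ¬ x ∈ t)).card := rfl
              omega
            have hc1 : (T.filter (fun t => x ∈ t)).card ≤ k^ℓ := hTxcard ▸ hdegle
            have hc2 : (T.filter (fun t => x ∈ t)).card ≤ T.card :=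
              Finset.card_le_card (Finset.filter_subset _ _)
            have : ((Tn.card : ℝ)) = (T.card : ℝ) - ((T.filter (fun t => x ∈ t)).card : ℝ) := by
              rw [hTncard]
              push_cast [Nat.cast_sub hc2]
              ring
            rw [this]
            have hc1' : ((T.filter (fun t => x ∈ t)).card : ℝ) ≤ ((k:ℝ))^ℓ := by
              exact_mod_cast hc1
            push_cast at hcard' ⊢
            linarith
          calc Q p T ≤ p * Q p Tx + (1-p) * Q p Tn := hstep
            _ ≤ p * ((ℓ:ℝ) * (1-p)^A) + (1-p) * ((1-p)^n + (ℓ:ℝ) * (1-p)^A) := by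
                apply add_le_add
                · exact mul_le_mul_of_nonneg_left hQx hp.le
                · exact mul_le_mul_of_nonneg_left hQn (by linarith)
            _ = (1-p)^(n+1) + (ℓ:ℝ) * (1-p)^A := by ring
    -- use inner with n = ceil A
    have hinner := inner ⌈A⌉₊ T hw (by
      have hceil : (⌈A⌉₊:ℝ) - 1 ≤ A := by
        have := Nat.ceil_lt_add_one hA0
        linarith
      have hAk : A * (((ℓ:ℝ)+1) * (k:ℝ)^ℓ) = a := by
        rw [hAdef]
        field_simp
      have h2 : ((⌈A⌉₊:ℝ) - 1) * (k:ℝ)^ℓ ≤ A * (k:ℝ)^ℓ := by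
        apply mul_le_mul_of_nonneg_right hceil (by positivity)
      have hAk2 : A * (k:ℝ)^ℓ = a / ((ℓ:ℝ)+1) := by
        rw [hAdef]
        field_simp
      have h3 : g + A * (k:ℝ)^ℓ ≤ a := by
        rw [hgdef, hAk2]
        rw [show a * (ℓ:ℝ) / ((ℓ:ℝ)+1) + a / ((ℓ:ℝ)+1) = a by field_simp]
      linarith)
    have hpowle : (1-p)^(⌈A⌉₊ : ℕ) ≤ (1-p) ^ A := by
      rw [← Real.rpow_natCast (1-p) ⌈A⌉₊]
      exact Real.rpow_le_rpow_of_exponent_ge h1p h1p1 (Nat.le_ceil A)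
    have hgoal : Q p T ≤ ((ℓ:ℝ)+1) * (1-p)^A := by
      calc Q p T ≤ (1-p)^(⌈A⌉₊:ℕ) + (ℓ:ℝ) * (1-p)^A := hinner
        _ ≤ (1-p)^A + (ℓ:ℝ) * (1-p)^A := by linarith
        _ = ((ℓ:ℝ)+1) * (1-p)^A := by ring
    have hexp : a / ((↑(ℓ+1):ℝ) * (k:ℝ) ^ (ℓ + 1 - 1)) = A := by
      have hred : ℓ + 1 - 1 = ℓ := rfl
      rw [hred, hAdef]
      push_cast
      ring_nf
    rw [hexp]
    push_cast
    exact hgoal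


def w {k m : ℕ} (p : ℝ) (ω : Fin k → Fin m → Bool) : ℝ := ∏ j, ∏ u, f p (ω j u)
def col {k m : ℕ} (ω : Fin k → Fin m → Bool) (u : Fin m) : Fin k → Bool := fun j => ω j u

lemma w_eq {k m : ℕ} (ω : Fin k → Fin m → Bool) : w p ω = ∏ u, colW p (col ω u) :=
  Finset.prod_comm

lemma w_nonneg (hp : 0 ≤ p) (hp1 : p ≤ 1) {k m : ℕ} (ω : Fin k → Fin m → Bool) :
    0 ≤ w p ω := by
  rw [w_eq]
  exact Finset.prod_nonneg fun u _ => colW_nonneg hp hp1 _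

lemma sum_fact {k m : ℕ} (G : Fin m → (Fin k → Bool) → ℝ) :
    ∑ ω : Fin k → Fin m → Bool, ∏ u, G u (col ω u) = ∏ u, ∑ b : Fin k → Bool, G u b := by
  rw [Fintype.prod_sum (fun (u : Fin m) (b : Fin k → Bool) => G u b)]
  exact Fintype.sum_equiv (Equiv.piComm (fun (_ : Fin k) (_ : Fin m) => Bool))
    _ _ (fun ω => rfl)

variable {k m : ℕ} (A : (Fin k → Bool) → Prop)

def qv (p : ℝ) (A : (Fin k → Bool) → Prop) : ℝ :=
  ∑ b : Fin k → Bool, colW p b * (if A b then 1 else 0)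

lemma moment (S : Finset (Fin m)) :
    ∑ ω : Fin k → Fin m → Bool, w p ω * ∏ u ∈ S, (if A (col ω u) then 1 else 0)
      = (qv p A) ^ S.card := by
  have key : ∀ ω : Fin k → Fin m → Bool,
      w p ω * ∏ u ∈ S, (if A (col ω u) then 1 else 0)
      = ∏ u, (colW p (col ω u) * (if u ∈ S then (if A (col ω u) then 1 else 0) else 1)) := by
    intro ω
    rw [Finset.prod_mul_distrib, ← w_eq]
    congr 1
    rw [Finset.prod_ite_mem univ S (fun u => if A (col ω u) then (1:ℝ) else 0), univ_inter]
  calc ∑ ω : Fin k → Fin m → Bool, w p ω * ∏ u ∈ S, (if A (col ω u) then 1 else 0)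
      = ∑ ω : Fin k → Fin m → Bool,
          ∏ u, (colW p (col ω u) * (if u ∈ S then (if A (col ω u) then 1 else 0) else 1)) :=
        Finset.sum_congr rfl (fun ω _ => key ω)
    _ = ∏ u, ∑ b : Fin k → Bool, colW p b * (if u ∈ S then (if A b then 1 else 0) else 1) :=
        sum_fact (fun u b => colW p b * (if u ∈ S then (if A b then 1 else 0) else 1))
    _ = ∏ u, (if u ∈ S then qv p A else 1) := by
        apply Finset.prod_congr rfl
        intro u _
        by_cases hu : u ∈ S
        · simp only [hu, if_true]; rfl
        · simp only [hu, if_false, mul_one]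
          exact sum_colW
    _ = (qv p A) ^ S.card := by
        rw [Finset.prod_ite_mem univ S (fun _ => qv p A), univ_inter, Finset.prod_const]

lemma sum_w : ∑ ω : Fin k → Fin m → Bool, w p ω = 1 := by
  have := moment (p := p) (fun _ : Fin k → Bool => True) (∅ : Finset (Fin m))
  simpa using this

def X (ω : Fin k → Fin m → Bool) : ℝ := ∑ u, (if A (col ω u) then 1 else 0)

lemma EX : ∑ ω : Fin k → Fin m → Bool, w p ω * X A ω = m * qv p A := by
  have : ∀ ω : Fin k → Fin m → Bool, w p ω * X A ω
      = ∑ u, w p ω * (if A (col ω u) then 1 else 0) := by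
    intro ω; rw [X, Finset.mul_sum]
  rw [Finset.sum_congr rfl (fun ω _ => this ω), Finset.sum_comm]
  have : ∀ u : Fin m, ∑ ω : Fin k → Fin m → Bool, w p ω * (if A (col ω u) then 1 else 0)
      = qv p A := by
    intro u
    have := moment (p := p) A ({u} : Finset (Fin m))
    simpa using this
  rw [Finset.sum_congr rfl (fun u _ => this u), Finset.sum_const, Finset.card_univ,
    Fintype.card_fin, nsmul_eq_mul]

lemma EX2 : ∑ ω : Fin k → Fin m → Bool, w p ω * (X A ω)^2
    = m * qv p A + ((m:ℝ)^2 - m) * (qv p A)^2 := by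
  have expand : ∀ ω : Fin k → Fin m → Bool, w p ω * (X A ω)^2
      = ∑ u, ∑ v, w p ω * ((if A (col ω u) then 1 else 0) * (if A (col ω v) then 1 else 0)) := by
    intro ω
    rw [X, sq, Finset.sum_mul_sum]
    rw [Finset.mul_sum]
    apply Finset.sum_congr rfl; intro u _
    rw [Finset.mul_sum]
  rw [Finset.sum_congr rfl (fun ω _ => expand ω), Finset.sum_comm]
  have inner : ∀ u : Fin m,
      ∑ v : Fin m, ∑ ω : Fin k → Fin m → Bool,
        w p ω * ((if A (col ω u) then 1 else 0) * (if A (col ω v) then 1 else 0))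
      = qv p A + ((m:ℝ) - 1) * (qv p A)^2 := by
    intro u
    have hv : ∀ v : Fin m, ∑ ω : Fin k → Fin m → Bool,
        w p ω * ((if A (col ω u) then 1 else 0) * (if A (col ω v) then 1 else 0))
        = if u = v then qv p A else (qv p A)^2 := by
      intro v
      by_cases huv : u = v
      · subst huv
        simp only [if_true]
        have h1 : ∀ ω : Fin k → Fin m → Bool,
            (if A (col ω u) then (1:ℝ) else 0) * (if A (col ω u) then 1 else 0)
            = ∏ x ∈ ({u} : Finset (Fin m)), (if A (col ω x) then 1 else 0) := by
          intro ω; rw [Finset.prod_singleton]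
          by_cases h : A (col ω u) <;> simp [h]
        rw [Finset.sum_congr rfl (fun ω _ => by rw [h1 ω])]
        have := moment (p := p) A ({u} : Finset (Fin m))
        simpa using this
      · simp only [huv, if_false]
        have h1 : ∀ ω : Fin k → Fin m → Bool,
            (if A (col ω u) then (1:ℝ) else 0) * (if A (col ω v) then 1 else 0)
            = ∏ x ∈ ({u, v} : Finset (Fin m)), (if A (col ω x) then 1 else 0) := by
          intro ω; rw [Finset.prod_pair huv]
        rw [Finset.sum_congr rfl (fun ω _ => by rw [h1 ω])]
        have := moment (p := p) A ({u, v} : Finset (Fin m))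
        rwa [Finset.card_pair huv] at this
    rw [Finset.sum_congr rfl (fun v _ => hv v)]
    have : ∀ v : Fin m, (if u = v then qv p A else (qv p A)^2)
        = (qv p A)^2 + (if u = v then qv p A - (qv p A)^2 else 0) := by
      intro v; by_cases h : u = v <;> simp [h]
    rw [Finset.sum_congr rfl (fun v _ => this v), Finset.sum_add_distrib,
      Finset.sum_ite_eq univ u (fun _ => qv p A - (qv p A)^2), if_pos (mem_univ u),
      Finset.sum_const, Finset.card_univ, Fintype.card_fin, nsmul_eq_mul]
    ring
  rw [Finset.sum_congr rfl (fun u _ => Eq.trans Finset.sum_comm (inner u)), Finset.sum_const,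
    Finset.card_univ, Fintype.card_fin, nsmul_eq_mul]
  ring

lemma Var : ∑ ω : Fin k → Fin m → Bool, w p ω * (X A ω - m * qv p A)^2
    = m * qv p A - m * (qv p A)^2 := by
  have expand : ∀ ω : Fin k → Fin m → Bool,
      w p ω * (X A ω - m * qv p A)^2
      = w p ω * (X A ω)^2 - (2 * (m * qv p A)) * (w p ω * X A ω)
        + (m * qv p A)^2 * w p ω := by
    intro ω; ring
  rw [Finset.sum_congr rfl (fun ω _ => expand ω)]
  rw [Finset.sum_add_distrib, Finset.sum_sub_distrib, ← Finset.mul_sum, ← Finset.mul_sum]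
  rw [EX2, EX, sum_w (k := k) (m := m) (p := p)]
  ring

lemma cheb (η : ℝ) (hp : 0 ≤ p) (hp1 : p ≤ 1) (hη : 0 < η) (hm : 1 ≤ m)
    (hq0 : 0 ≤ qv (k := k) p A) (hq : qv (k := k) p A ≤ η / 2) :
    ∑ ω : Fin k → Fin m → Bool, w p ω * (if η * m < X A ω then 1 else 0)
      ≤ 1 / (η^2 * m) := by
  have hm' : (1:ℝ) ≤ (m:ℝ) := by exact_mod_cast hm
  have hm0 : (0:ℝ) < m := by linarith
  set c : ℝ := m * qv p A with hc
  set t : ℝ := η * m / 2 with ht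
  have ht0 : 0 < t := by positivity
  have hcb : c ≤ η * m / 2 := by
    rw [hc]
    calc (m:ℝ) * qv p A ≤ m * (η/2) := by
          apply mul_le_mul_of_nonneg_left hq (by linarith)
      _ = η * m / 2 := by ring
  have pointwise : ∀ ω : Fin k → Fin m → Bool,
      w p ω * (if η * m < X A ω then 1 else 0) ≤ w p ω * ((X A ω - c)^2 / t^2) := by
    intro ω
    apply mul_le_mul_of_nonneg_left _ (w_nonneg hp hp1 ω)
    by_cases hb : η * m < X A ω
    · rw [if_pos hb]
      rw [le_div_iff₀ (by positivity)]
      have h1 : t ≤ X A ω - c := by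
        have : η * m - c ≥ η * m - η * m / 2 := by linarith
        have h2 : η * m - η * m / 2 = t := by rw [ht]; ring
        linarith
      calc (1:ℝ) * t^2 = t^2 := by ring
        _ ≤ (X A ω - c)^2 := by nlinarith
    · rw [if_neg hb]
      positivity
  calc ∑ ω : Fin k → Fin m → Bool, w p ω * (if η * m < X A ω then 1 else 0)
      ≤ ∑ ω : Fin k → Fin m → Bool, w p ω * ((X A ω - c)^2 / t^2) :=
        Finset.sum_le_sum (fun ω _ => pointwise ω)
    _ = (∑ ω : Fin k → Fin m → Bool, w p ω * (X A ω - c)^2) / t^2 := by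
        rw [Finset.sum_div]
        apply Finset.sum_congr rfl
        intro ω _; ring
    _ = (m * qv p A - m * (qv p A)^2) / t^2 := by rw [hc, Var]
    _ ≤ (m * (1/4)) / t^2 := by
        have hnum : (m:ℝ) * qv p A - m * (qv p A)^2 ≤ m * (1/4) := by
          nlinarith [sq_nonneg (qv p A - 1/2)]
        exact div_le_div_of_nonneg_right hnum (by positivity)
    _ = 1 / (η^2 * m) := by
        rw [ht]
        have hηne : η ≠ 0 := ne_of_gt hη
        have hmne : (m:ℝ) ≠ 0 := ne_of_gt hm0
        field_simp
        ring


lemma qv_unc {k : ℕ} (T : Finset (Finset (Fin k))) : qv p (Unc T) = Q p T := rfl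

lemma mem_inf_fin {m k : ℕ} (J : Finset (Fin k)) (H : Fin k → Finset (Fin m)) (u : Fin m) :
    u ∈ J.inf H ↔ ∀ j ∈ J, u ∈ H j := by
  induction J using Finset.cons_induction with
  | empty => simp [Finset.inf_empty]
  | cons j J hj ih => simp [Finset.inf_cons, ih]

/-- the uncovered set is the filter of uncovered columns -/
lemma uncovered_eq {m k : ℕ} (ω : Fin k → Fin m → Bool) (Js : Finset (Finset (Fin k))) :
    ((Finset.univ : Finset (Fin m)) \ Js.sup
        (fun J => Finset.univ ∩ J.inf (fun j => Finset.univ.filter (fun u => ω j u = true))))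
      = Finset.univ.filter (fun u => Unc Js (col ω u)) := by
  ext u
  simp only [Finset.mem_sdiff, Finset.mem_univ, true_and, Finset.mem_filter, Finset.mem_sup,
    Finset.mem_inter, mem_inf_fin]
  simp only [Unc, col]
  constructor
  · intro h t ht
    by_contra hcon
    push_neg at hcon
    exact h ⟨t, ht, fun j hj => by
      rcases Bool.eq_false_or_eq_true (ω j u) with h' | h'
      · exact h'
      · exact absurd h' (hcon j hj)⟩
  · rintro h ⟨t, ht, hall⟩
    obtain ⟨j, hj, hfalse⟩ := h t ht
    rw [hall j hj] at hfalse
    exact Bool.noConfusion hfalse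

lemma X_eq_card {m k : ℕ} (ω : Fin k → Fin m → Bool) (Js : Finset (Finset (Fin k))) :
    X (Unc Js) ω = ((Finset.univ.filter (fun u : Fin m => Unc Js (col ω u))).card : ℝ) := by
  rw [X, Finset.sum_boole]


lemma q_bound {κ : ℝ} (hp0 : 0 < p) (hp1 : p < 1) (hκ0 : 0 < κ) (ℓ k₀ : ℕ)
    (hℓ : 1 ≤ ℓ) (hk : 0 < k₀) (Js : Finset (Finset (Fin k₀)))
    (hw : ∀ J ∈ Js, J.card ≤ ℓ) (hr : κ * (k₀:ℝ)^ℓ ≤ (Js.card : ℝ)) :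
    Q p Js ≤ (ℓ:ℝ) * Real.exp (-(p * κ * k₀) / ℓ) := by
  have h1p : (0:ℝ) < 1 - p := by linarith
  have hk' : (0:ℝ) < k₀ := by exact_mod_cast hk
  have hℓ' : (1:ℝ) ≤ ℓ := by exact_mod_cast hℓ
  have ha : (0:ℝ) ≤ κ * (k₀:ℝ)^ℓ := by positivity
  have hmain := main_lemma hp0 hp1 ℓ hℓ k₀ hk Js hw (κ * (k₀:ℝ)^ℓ) ha hr
  have hkpow : (k₀:ℝ)^(ℓ-1) * (k₀:ℝ) = (k₀:ℝ)^ℓ := by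
    rw [← pow_succ, Nat.sub_add_cancel hℓ]
  have hE : (κ * (k₀:ℝ)^ℓ) / ((ℓ:ℝ) * (k₀:ℝ)^(ℓ-1)) = κ * k₀ / ℓ := by
    rw [div_eq_div_iff (by positivity) (by linarith)]
    rw [← hkpow]; ring
  have hEpos : (0:ℝ) ≤ κ * (k₀:ℝ) / ℓ := by positivity
  have hrpow : (1 - p) ^ (κ * (k₀:ℝ) / ℓ) ≤ Real.exp (-(p * κ * k₀) / ℓ) := by
    rw [Real.rpow_def_of_pos h1p]
    apply Real.exp_le_exp.mpr
    have hlog : Real.log (1 - p) ≤ -p := by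
      have := Real.log_le_sub_one_of_pos h1p
      linarith
    calc Real.log (1 - p) * (κ * (k₀:ℝ) / ℓ) ≤ (-p) * (κ * (k₀:ℝ) / ℓ) :=
          mul_le_mul_of_nonneg_right hlog hEpos
      _ = -(p * κ * k₀) / ℓ := by ring
  calc Q p Js ≤ (ℓ:ℝ) * (1 - p) ^ ((κ * (k₀:ℝ)^ℓ) / ((ℓ:ℝ) * (k₀:ℝ)^(ℓ-1))) := hmain
    _ = (ℓ:ℝ) * (1 - p) ^ (κ * (k₀:ℝ) / ℓ) := by rw [hE]
    _ ≤ (ℓ:ℝ) * Real.exp (-(p * κ * k₀) / ℓ) :=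
        mul_le_mul_of_nonneg_left hrpow (Nat.cast_nonneg ℓ)

end
end SID10

set_option maxHeartbeats 1000000 in
open Classical in
theorem stmt_10 (p κ : ℝ) (hp : p ∈ Set.Ioo (0:ℝ) 1) (hκ : κ ∈ Set.Ioo (0:ℝ) 1)
    (ℓ k₀ : ℕ) (hℓ : 0 < ℓ) :
    Filter.Tendsto
      (fun m₀ : ℕ =>
        ∑ ω : Fin k₀ → Fin m₀ → Bool,
          (if SIDFam (Finset.univ : Finset (Fin m₀))
                (fun j => Finset.univ.filter (fun u => ω j u = true))
                (κ * (k₀ : ℝ) ^ ℓ) ℓ (2 * (ℓ : ℝ) * Real.exp (-(p * κ * k₀) / ℓ))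
            then ∏ j : Fin k₀, ∏ u : Fin m₀, (if ω j u then p else 1 - p) else 0))
      Filter.atTop (nhds (1 : ℝ)) := by
  classical
  obtain ⟨hp0, hp1⟩ := hp
  obtain ⟨hκ0, hκ1⟩ := hκ
  have hℓ1 : 1 ≤ ℓ := hℓ
  have hℓ' : (1:ℝ) ≤ (ℓ:ℝ) := by exact_mod_cast hℓ1
  set η : ℝ := 2 * (ℓ : ℝ) * Real.exp (-(p * κ * k₀) / ℓ) with hηdef
  have hη : 0 < η := by positivity
  -- the weight in the statement is `SID10.w`
  have hwid : ∀ m₀ : ℕ, ∀ ω : Fin k₀ → Fin m₀ → Bool,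
      (∏ j : Fin k₀, ∏ u : Fin m₀, (if ω j u then p else 1 - p)) = SID10.w p ω := by
    intro m₀ ω; rfl
  -- case k₀ = 0 : SIDFam always holds
  rcases Nat.eq_zero_or_pos k₀ with hk0 | hk0
  · subst hk0
    have hconst : ∀ m₀ : ℕ,
        (∑ ω : Fin 0 → Fin m₀ → Bool,
          (if SIDFam (Finset.univ : Finset (Fin m₀))
                (fun j => Finset.univ.filter (fun u => ω j u = true))
                (κ * ((0:ℕ) : ℝ) ^ ℓ) ℓ η
            then ∏ j : Fin 0, ∏ u : Fin m₀, (if ω j u then p else 1 - p) else 0)) = 1 := by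
      intro m₀
      have hSID : ∀ ω : Fin 0 → Fin m₀ → Bool,
          SIDFam (Finset.univ : Finset (Fin m₀))
            (fun j => Finset.univ.filter (fun u => ω j u = true))
            (κ * ((0:ℕ) : ℝ) ^ ℓ) ℓ η := by
        intro ω Js hJw hJr
        have hη1 : (1:ℝ) ≤ η := by
          rw [hηdef]
          simp only [Nat.cast_zero, mul_zero, neg_zero, zero_div, Real.exp_zero, mul_one]
          linarith
        have hc1 : ((Finset.univ \ Js.sup fun J => Finset.univ ∩
            J.inf fun j => Finset.univ.filter (fun u => ω j u = true)).card : ℝ)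
            ≤ ((Finset.univ : Finset (Fin m₀)).card : ℝ) := by
          exact_mod_cast Finset.card_le_card (Finset.sdiff_subset)
        have hc2 : (0:ℝ) ≤ ((Finset.univ : Finset (Fin m₀)).card : ℝ) := by positivity
        nlinarith
      rw [Finset.sum_congr rfl (fun ω _ => by rw [if_pos (hSID ω), hwid m₀ ω])]
      exact SID10.sum_w
    have : (fun m₀ : ℕ =>
        ∑ ω : Fin 0 → Fin m₀ → Bool,
          (if SIDFam (Finset.univ : Finset (Fin m₀))
                (fun j => Finset.univ.filter (fun u => ω j u = true))
                (κ * ((0:ℕ) : ℝ) ^ ℓ) ℓ η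
            then ∏ j : Fin 0, ∏ u : Fin m₀, (if ω j u then p else 1 - p) else 0))
        = fun _ => (1:ℝ) := funext hconst
    rw [this]
    exact tendsto_const_nhds
  -- main case k₀ ≥ 1
  · set N : ℕ := Fintype.card (Finset (Finset (Fin k₀))) with hNdef
    have upper : ∀ m₀ : ℕ,
        (∑ ω : Fin k₀ → Fin m₀ → Bool,
          (if SIDFam (Finset.univ : Finset (Fin m₀))
                (fun j => Finset.univ.filter (fun u => ω j u = true))
                (κ * (k₀ : ℝ) ^ ℓ) ℓ η
            then ∏ j : Fin k₀, ∏ u : Fin m₀, (if ω j u then p else 1 - p) else 0)) ≤ 1 := by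
      intro m₀
      calc _ ≤ ∑ ω : Fin k₀ → Fin m₀ → Bool, SID10.w p ω := by
            apply Finset.sum_le_sum
            intro ω _
            rw [hwid m₀ ω]
            split
            · exact le_rfl
            · exact SID10.w_nonneg hp0.le hp1.le ω
        _ = 1 := SID10.sum_w
    have lower : ∀ m₀ : ℕ, 1 ≤ m₀ →
        1 - (N:ℝ) / (η^2 * m₀) ≤
        (∑ ω : Fin k₀ → Fin m₀ → Bool,
          (if SIDFam (Finset.univ : Finset (Fin m₀))
                (fun j => Finset.univ.filter (fun u => ω j u = true))
                (κ * (k₀ : ℝ) ^ ℓ) ℓ η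
            then ∏ j : Fin k₀, ∏ u : Fin m₀, (if ω j u then p else 1 - p) else 0)) := by
      intro m₀ hm₀
      set Jfam : Finset (Finset (Finset (Fin k₀))) :=
        Finset.univ.filter (fun Js : Finset (Finset (Fin k₀)) =>
          (∀ J ∈ Js, J.card ≤ ℓ) ∧ κ * (k₀:ℝ)^ℓ ≤ (Js.card : ℝ)) with hJfam
      -- failure indicator bounded by union of per-family bad events
      have pointwise : ∀ ω : Fin k₀ → Fin m₀ → Bool,
          (if SIDFam (Finset.univ : Finset (Fin m₀))
                (fun j => Finset.univ.filter (fun u => ω j u = true))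
                (κ * (k₀ : ℝ) ^ ℓ) ℓ η then (0:ℝ) else 1)
          ≤ ∑ Js ∈ Jfam, (if η * m₀ < SID10.X (SID10.Unc Js) ω then 1 else 0) := by
        intro ω
        split
        · apply Finset.sum_nonneg
          intro Js _
          positivity
        · rename_i hSID
          rw [SIDFam] at hSID
          push_neg at hSID
          obtain ⟨Js, hJw, hJr, hbad⟩ := hSID
          have hJmem : Js ∈ Jfam := by
            rw [hJfam, Finset.mem_filter]
            exact ⟨Finset.mem_univ _, hJw, hJr⟩
          have hXbad : η * m₀ < SID10.X (SID10.Unc Js) ω := by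
            rw [SID10.X_eq_card, ← SID10.uncovered_eq]
            calc η * (m₀:ℝ) = η * ((Finset.univ : Finset (Fin m₀)).card : ℝ) := by
                  rw [Finset.card_univ, Fintype.card_fin]
              _ < _ := hbad
          calc (1:ℝ) = (if η * m₀ < SID10.X (SID10.Unc Js) ω then (1:ℝ) else 0) := by
                rw [if_pos hXbad]
            _ ≤ _ := Finset.single_le_sum (f := fun Js =>
                (if η * m₀ < SID10.X (SID10.Unc Js) ω then (1:ℝ) else 0))
                (fun Js _ => by positivity) hJmem
      -- per-family Chebyshev bound
      have percheb : ∀ Js ∈ Jfam,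
          ∑ ω : Fin k₀ → Fin m₀ → Bool,
            SID10.w p ω * (if η * m₀ < SID10.X (SID10.Unc Js) ω then 1 else 0)
          ≤ 1 / (η^2 * m₀) := by
        intro Js hJs
        rw [hJfam, Finset.mem_filter] at hJs
        obtain ⟨-, hJw, hJr⟩ := hJs
        apply SID10.cheb _ _ hp0.le hp1.le hη hm₀
        · rw [SID10.qv_unc]
          exact SID10.Q_nonneg hp0.le hp1.le Js
        · rw [SID10.qv_unc]
          have := SID10.q_bound hp0 hp1 hκ0 ℓ k₀ hℓ1 hk0 Js hJw hJr
          calc SID10.Q p Js ≤ (ℓ:ℝ) * Real.exp (-(p * κ * k₀) / ℓ) := this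
            _ = η / 2 := by rw [hηdef]; ring
      -- combine
      have hbadsum :
          ∑ ω : Fin k₀ → Fin m₀ → Bool, SID10.w p ω *
            (if SIDFam (Finset.univ : Finset (Fin m₀))
                (fun j => Finset.univ.filter (fun u => ω j u = true))
                (κ * (k₀ : ℝ) ^ ℓ) ℓ η then (0:ℝ) else 1)
          ≤ (N:ℝ) / (η^2 * m₀) := by
        calc ∑ ω : Fin k₀ → Fin m₀ → Bool, SID10.w p ω *
              (if SIDFam (Finset.univ : Finset (Fin m₀))
                  (fun j => Finset.univ.filter (fun u => ω j u = true))
                  (κ * (k₀ : ℝ) ^ ℓ) ℓ η then (0:ℝ) else 1)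
            ≤ ∑ ω : Fin k₀ → Fin m₀ → Bool, SID10.w p ω *
              (∑ Js ∈ Jfam, (if η * m₀ < SID10.X (SID10.Unc Js) ω then 1 else 0)) := by
              apply Finset.sum_le_sum
              intro ω _
              exact mul_le_mul_of_nonneg_left (pointwise ω) (SID10.w_nonneg hp0.le hp1.le ω)
          _ = ∑ Js ∈ Jfam, ∑ ω : Fin k₀ → Fin m₀ → Bool,
              SID10.w p ω * (if η * m₀ < SID10.X (SID10.Unc Js) ω then 1 else 0) := by
              rw [Finset.sum_congr rfl (fun (ω : Fin k₀ → Fin m₀ → Bool) _ =>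
                Finset.mul_sum Jfam (fun Js =>
                  (if η * m₀ < SID10.X (SID10.Unc Js) ω then (1:ℝ) else 0)) (SID10.w p ω))]
              exact Finset.sum_comm
          _ ≤ ∑ _Js ∈ Jfam, 1 / (η^2 * m₀) := Finset.sum_le_sum percheb
          _ = (Jfam.card : ℝ) * (1 / (η^2 * m₀)) := by
              rw [Finset.sum_const, nsmul_eq_mul]
          _ ≤ (N:ℝ) / (η^2 * m₀) := by
              have hcard : (Jfam.card : ℝ) ≤ (N:ℝ) := by
                rw [hNdef]
                exact_mod_cast Finset.card_le_card (Finset.subset_univ _)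
              have hm' : (1:ℝ) ≤ (m₀:ℝ) := by exact_mod_cast hm₀
              rw [div_eq_mul_one_div ((N:ℝ)) (η^2 * m₀)]
              exact mul_le_mul_of_nonneg_right hcard (by positivity)
      -- now rearrange
      have hsplit : (∑ ω : Fin k₀ → Fin m₀ → Bool,
          (if SIDFam (Finset.univ : Finset (Fin m₀))
                (fun j => Finset.univ.filter (fun u => ω j u = true))
                (κ * (k₀ : ℝ) ^ ℓ) ℓ η
            then ∏ j : Fin k₀, ∏ u : Fin m₀, (if ω j u then p else 1 - p) else 0))
          = 1 - ∑ ω : Fin k₀ → Fin m₀ → Bool, SID10.w p ω *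
            (if SIDFam (Finset.univ : Finset (Fin m₀))
                (fun j => Finset.univ.filter (fun u => ω j u = true))
                (κ * (k₀ : ℝ) ^ ℓ) ℓ η then (0:ℝ) else 1) := by
        rw [eq_sub_iff_add_eq, ← Finset.sum_add_distrib]
        conv_rhs => rw [show (1:ℝ) = ∑ ω : Fin k₀ → Fin m₀ → Bool, SID10.w p ω
          from SID10.sum_w.symm]
        apply Finset.sum_congr rfl
        intro ω _
        rw [hwid m₀ ω]
        split <;> ring
      rw [hsplit]
      linarith [hbadsum]
    -- squeeze
    have hlim : Filter.Tendsto (fun m₀ : ℕ => 1 - (N:ℝ) / (η^2 * m₀))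
        Filter.atTop (nhds 1) := by
      have h1 : Filter.Tendsto (fun m₀ : ℕ => (N:ℝ) / (η^2 * m₀)) Filter.atTop (nhds 0) := by
        have := tendsto_const_div_atTop_nhds_zero_nat ((N:ℝ) / η^2)
        apply this.congr
        intro m₀
        rw [div_div]
      have := (tendsto_const_nhds (x := (1:ℝ)) (f := Filter.atTop)).sub h1
      simpa using this
    apply tendsto_of_tendsto_of_tendsto_of_le_of_le' hlim tendsto_const_nhds
    · filter_upwards [Filter.eventually_ge_atTop 1] with m₀ hm₀
      exact lower m₀ hm₀
    · filter_upwards with m₀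
      exact upper m₀
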